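/- Let q ≡ 7 (mod 8), r ≡ 3 (mod 8), s ≡ 3 (mod 8) be distinct primes with (q/r) = (q/s) = -1 and (s/r) = 1. Then there do not exist integers a, b₁, b₂ with a + 1 = 2q·b₁² and a - 1 = r·s·b₂². -/
import Mathlib


/-- Let q ≡ 7 (mod 8), r ≡ 3 (mod 8), s ≡ 3 (mod 8) be distinct primes with
(q/r) = (q/s) = -1 and (s/r) = 1. Then there do not exist integers a, b₁, b₂ with
a + 1 = 2q·b₁² and a - 1 = r·s·b₂². -/
theorem stmt0 (q r s : ℕ) (hq : q.Prime) (hr : r.Prime) (hs : s.Prime)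
    (hqr : q ≠ r) (hqs : q ≠ s) (hrs : r ≠ s)
    (hq8 : q % 8 = 7) (hr8 : r % 8 = 3) (hs8 : s % 8 = 3)
    (h1 : @legendreSym r ⟨hr⟩ (q : ℤ) = -1) (h2 : @legendreSym s ⟨hs⟩ (q : ℤ) = -1)
    (h3 : @legendreSym r ⟨hr⟩ (s : ℤ) = 1) :
    ¬ ∃ a b₁ b₂ : ℤ, a + 1 = 2 * q * b₁ ^ 2 ∧ a - 1 = r * s * b₂ ^ 2 := by
  haveI : Fact r.Prime := ⟨hr⟩
  rintro ⟨a, b₁, b₂, h4, h5⟩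
  have hrne2 : r ≠ 2 := by omega
  -- (2 | r) = -1
  have hleg2 : legendreSym r 2 = -1 := by
    rw [legendreSym.at_two hrne2, ZMod.χ₈_nat_eq_if_mod_eight, hr8]
    norm_num
    omega
  -- a + 1 ≡ 2 mod r
  have e1 : ((a + 1 : ℤ) : ZMod r) = ((2 : ℤ) : ZMod r) := by
    have : a + 1 = (r : ℤ) * s * b₂ ^ 2 + 2 := by linarith
    rw [this]
    push_cast
    simp
  have h6 : legendreSym r (a + 1) = -1 := by
    rw [legendreSym, e1, ← legendreSym, hleg2]
  have h7 : legendreSym r (a + 1) = legendreSym r b₁ ^ 2 := by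
    rw [h4, show (2 : ℤ) * q * b₁ ^ 2 = 2 * q * b₁ ^ 2 from rfl,
      legendreSym.mul, legendreSym.mul, hleg2, h1]
    have : legendreSym r (b₁ ^ 2) = legendreSym r b₁ ^ 2 := by
      rw [show b₁ ^ 2 = b₁ * b₁ by ring, legendreSym.mul, sq]
    rw [this]
    ring
  rw [h6] at h7
  nlinarith [sq_nonneg (legendreSym r b₁)]
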